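/- Let ε ∈ [0, π/2], let e₁, e₂, e₃ be the standard basis of ℝ³, and let n̂₁, n̂₂, n̂₃ ∈ ℝ³ be unit vectors with n̂ₖ · eₖ ≥ cos ε for k = 1,2,3. Let Φ be the 3×3 real matrix whose k-th row is n̂ₖ. Then for every t ∈ ℝ³, ‖Φ t − t‖ ≤ λ(ε)·‖t‖, where λ(ε) = 1 − cos ε + √2·sin ε. -/

import Mathlib

open Matrix

/-- if the unit vectors n̂ₖ (rows of Φ) each satisfy n̂ₖ·eₖ ≥ cos ε, then
for all t ∈ ℝ³, ‖Φt − t‖ ≤ (1 − cos ε + √2 sin ε)‖t‖ (Euclidean norms). -/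
theorem stmt7 (ε : ℝ) (hε : ε ∈ Set.Icc 0 (Real.pi / 2))
    (n : Fin 3 → Fin 3 → ℝ)
    (hunit : ∀ k, Real.sqrt (∑ i, (n k i) ^ 2) = 1)
    (hclose : ∀ k, n k ⬝ᵥ Pi.single k 1 ≥ Real.cos ε)
    (Φ : Matrix (Fin 3) (Fin 3) ℝ) (hΦ : Φ = Matrix.of n) :
    ∀ t : Fin 3 → ℝ,
      Real.sqrt (∑ i, (Φ.mulVec t i - t i) ^ 2)
        ≤ (1 - Real.cos ε + Real.sqrt 2 * Real.sin ε) * Real.sqrt (∑ i, (t i) ^ 2) := by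
  intro t
  rw [hΦ]
  obtain ⟨hε0, hε2⟩ := hε
  have hpi := Real.pi_pos
  have hc0 : 0 ≤ Real.cos ε := Real.cos_nonneg_of_mem_Icc ⟨by linarith, hε2⟩
  have hs0 : 0 ≤ Real.sin ε := Real.sin_nonneg_of_nonneg_of_le_pi hε0 (by linarith)
  have hc1 : Real.cos ε ≤ 1 := Real.cos_le_one ε
  -- row facts
  have hsum : ∀ k, ∑ i, (n k i) ^ 2 = 1 := by
    intro k
    have := hunit k
    have h0 : 0 ≤ ∑ i, (n k i) ^ 2 := Finset.sum_nonneg fun i _ => sq_nonneg _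
    nlinarith [Real.sq_sqrt h0, this]
  have hdiag : ∀ k, Real.cos ε ≤ n k k := by
    intro k
    have := hclose k
    simpa [dotProduct, Pi.single_apply] using this
  have hdle1 : ∀ k, n k k ≤ 1 := by
    intro k
    have h1 : (n k k) ^ 2 ≤ ∑ i, (n k i) ^ 2 :=
      Finset.single_le_sum (f := fun i => (n k i) ^ 2) (fun i _ => sq_nonneg _)
        (Finset.mem_univ k)
    nlinarith [hdiag k, hsum k]
  have hoff : ∀ k, ∑ i ∈ Finset.univ.erase k, (n k i) ^ 2 ≤ Real.sin ε ^ 2 := by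
    intro k
    have h1 : ∑ i ∈ Finset.univ.erase k, (n k i) ^ 2 = 1 - (n k k) ^ 2 := by
      have h : (n k k) ^ 2 + ∑ i ∈ Finset.univ.erase k, (n k i) ^ 2 = 1 := by
        rw [← hsum k]
        exact Finset.add_sum_erase Finset.univ (fun i => (n k i) ^ 2) (Finset.mem_univ k)
      linarith
    have h2 := Real.sin_sq_add_cos_sq ε
    nlinarith [hdiag k, hdle1 k]
  -- split into diagonal and off-diagonal parts, in EuclideanSpace
  set u : EuclideanSpace ℝ (Fin 3) := WithLp.toLp 2 (fun k => (n k k - 1) * t k) with hu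
  set v : EuclideanSpace ℝ (Fin 3) := WithLp.toLp 2 (fun k => ∑ i ∈ Finset.univ.erase k, n k i * t i) with hv
  have hsplit : ∀ k, (Matrix.of n).mulVec t k - t k = u k + v k := by
    intro k
    have := Finset.add_sum_erase Finset.univ (fun i => n k i * t i) (Finset.mem_univ k)
    simp only [Matrix.mulVec, dotProduct, Matrix.of_apply, hu, hv, PiLp.toLp_apply]
    rw [← this]
    ring
  set T : ℝ := Real.sqrt (∑ i, (t i) ^ 2) with hT
  have hT0 : 0 ≤ T := Real.sqrt_nonneg _
  have hT2 : T ^ 2 = ∑ i, (t i) ^ 2 := Real.sq_sqrt (Finset.sum_nonneg fun i _ => sq_nonneg _)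
  have htk : ∀ k, ∑ i ∈ Finset.univ.erase k, (t i) ^ 2 = T ^ 2 - (t k) ^ 2 := by
    intro k
    have h : (t k) ^ 2 + ∑ i ∈ Finset.univ.erase k, (t i) ^ 2 = ∑ i, (t i) ^ 2 :=
      Finset.add_sum_erase Finset.univ (fun i => (t i) ^ 2) (Finset.mem_univ k)
    rw [hT2]
    linarith
  -- norms
  have hnorm : ∀ x : EuclideanSpace ℝ (Fin 3), ‖x‖ = Real.sqrt (∑ i, (x i) ^ 2) := by
    intro x
    rw [EuclideanSpace.norm_eq]
    congr 1
    exact Finset.sum_congr rfl fun i _ => by rw [Real.norm_eq_abs, sq_abs]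
  have hgoal : Real.sqrt (∑ i, ((Matrix.of n).mulVec t i - t i) ^ 2) = ‖u + v‖ := by
    rw [hnorm]
    congr 1
    exact Finset.sum_congr rfl fun i _ => by rw [hsplit i]; rfl
  have hubound : ‖u‖ ≤ (1 - Real.cos ε) * T := by
    rw [hnorm]
    have h1 : ∑ i, (u i) ^ 2 ≤ (1 - Real.cos ε) ^ 2 * T ^ 2 := by
      rw [hT2, Finset.mul_sum]
      apply Finset.sum_le_sum
      intro i _
      have h1 := hdiag i
      have h2 := hdle1 i
      have h3 : u i = (n i i - 1) * t i := rfl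
      rw [h3]
      nlinarith [sq_nonneg (t i), mul_nonneg (mul_nonneg (sub_nonneg.2 h1)
        (show (0:ℝ) ≤ 2 - n i i - Real.cos ε by linarith)) (sq_nonneg (t i))]
    calc Real.sqrt (∑ i, (u i) ^ 2) ≤ Real.sqrt ((1 - Real.cos ε) ^ 2 * T ^ 2) :=
          Real.sqrt_le_sqrt h1
      _ = (1 - Real.cos ε) * T := by
          rw [← mul_pow, Real.sqrt_sq (mul_nonneg (by linarith) hT0)]
  have hvbound : ‖v‖ ≤ Real.sqrt 2 * Real.sin ε * T := by
    rw [hnorm]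
    have hcs : ∀ k, (v k) ^ 2 ≤ Real.sin ε ^ 2 * (T ^ 2 - (t k) ^ 2) := by
      intro k
      have h1 := Finset.sum_mul_sq_le_sq_mul_sq (Finset.univ.erase k)
        (fun i => n k i) (fun i => t i)
      have h3 : v k = ∑ i ∈ Finset.univ.erase k, n k i * t i := rfl
      rw [h3]
      have h4 := hoff k
      have h5 : 0 ≤ ∑ i ∈ Finset.univ.erase k, (n k i) ^ 2 :=
        Finset.sum_nonneg fun i _ => sq_nonneg _
      have h6 : (0:ℝ) ≤ T ^ 2 - t k ^ 2 := by
        rw [← htk k]; exact Finset.sum_nonneg fun i _ => sq_nonneg _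
      calc (∑ i ∈ Finset.univ.erase k, n k i * t i) ^ 2
          ≤ (∑ i ∈ Finset.univ.erase k, (n k i) ^ 2) * (T ^ 2 - t k ^ 2) := by
            rw [← htk k]; exact h1
        _ ≤ Real.sin ε ^ 2 * (T ^ 2 - t k ^ 2) := mul_le_mul_of_nonneg_right h4 h6
    have h2 : ∑ k, (v k) ^ 2 ≤ 2 * Real.sin ε ^ 2 * T ^ 2 := by
      calc ∑ k, (v k) ^ 2 ≤ ∑ k : Fin 3, Real.sin ε ^ 2 * (T ^ 2 - (t k) ^ 2) :=
            Finset.sum_le_sum fun k _ => hcs k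
        _ = Real.sin ε ^ 2 * (3 * T ^ 2 - ∑ k, (t k) ^ 2) := by
            rw [← Finset.mul_sum]
            congr 1
            rw [Finset.sum_sub_distrib, Finset.sum_const]
            simp
        _ = 2 * Real.sin ε ^ 2 * T ^ 2 := by rw [← hT2]; ring
    calc Real.sqrt (∑ k, (v k) ^ 2) ≤ Real.sqrt (2 * Real.sin ε ^ 2 * T ^ 2) :=
          Real.sqrt_le_sqrt h2
      _ = Real.sqrt 2 * Real.sin ε * T := by
          rw [show 2 * Real.sin ε ^ 2 * T ^ 2 = 2 * (Real.sin ε * T) ^ 2 by ring,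
            Real.sqrt_mul (by norm_num), Real.sqrt_sq (mul_nonneg hs0 hT0)]
          ring
  rw [hgoal]
  calc ‖u + v‖ ≤ ‖u‖ + ‖v‖ := norm_add_le u v
    _ ≤ (1 - Real.cos ε) * T + Real.sqrt 2 * Real.sin ε * T := add_le_add hubound hvbound
    _ = (1 - Real.cos ε + Real.sqrt 2 * Real.sin ε) * T := by ring
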